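/- Let β > 0, ω > 0, α ≥ 0, S > 0 and ε ∈ (0, 1). If u_ε : [0, S] → ℝ is a twice continuously differentiable solution of u_ε'' + (β/√ω)·u_ε' + √(2·max(u_ε, 0) + ε) = 1 with u_ε(0) = α²/2 and u_ε'(0) = 0, then for every s ∈ [0, S]: (1/2)·u_ε'(s)² + (β/(4√ω))·∫₀ˢ u_ε'(t)² dt ≤ (S·√ω/(2β))·(α² + 1) + (√ω/β)·(1 + S·√ω/β)²·S. In particular the bound on max_{s∈[0,S]} |u_ε'(s)| obtained from this inequality is independent of ε. -/
import Mathlib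


open Set

lemma aux_le_of_deriv_nonpos {S : ℝ} (hS : 0 < S) {f f' : ℝ → ℝ}
    (hf : ∀ x ∈ Icc (0:ℝ) S, HasDerivWithinAt f (f' x) (Icc 0 S) x)
    (hf' : ∀ x ∈ Ioo (0:ℝ) S, f' x ≤ 0) :
    ∀ s ∈ Icc (0:ℝ) S, f s ≤ f 0 := by
  have hcont : ContinuousOn f (Icc 0 S) := fun x hx => (hf x hx).continuousWithinAt
  have anti : AntitoneOn f (Icc 0 S) := by
    apply antitoneOn_of_deriv_nonpos (convex_Icc 0 S) hcont
    · intro x hx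
      rw [interior_Icc] at hx
      exact (((hf x (Ioo_subset_Icc_self hx)).hasDerivAt
        (Icc_mem_nhds hx.1 hx.2)).differentiableAt).differentiableWithinAt
    · intro x hx
      rw [interior_Icc] at hx
      rw [((hf x (Ioo_subset_Icc_self hx)).hasDerivAt (Icc_mem_nhds hx.1 hx.2)).deriv]
      exact hf' x hx
  intro s hs
  exact anti (left_mem_Icc.mpr hS.le) hs hs.1

set_option maxHeartbeats 1000000 in
/-- The ε-independent energy bound for solutions of the regularized Washburn
equation `u_ε'' + (β/√ω)u_ε' + √(2[u_ε]₊ + ε) = 1`. -/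
theorem stmt_3
    (β ω α S ε : ℝ) (hβ : 0 < β) (hω : 0 < ω) (hα : 0 ≤ α) (hS : 0 < S)
    (hε : ε ∈ Ioo (0:ℝ) 1)
    (u u' u'' : ℝ → ℝ)
    (hu' : ∀ s ∈ Icc (0:ℝ) S, HasDerivWithinAt u (u' s) (Icc 0 S) s)
    (hu'' : ∀ s ∈ Icc (0:ℝ) S, HasDerivWithinAt u' (u'' s) (Icc 0 S) s)
    (hu''c : ContinuousOn u'' (Icc 0 S))
    (hODE : ∀ s ∈ Icc (0:ℝ) S,
      u'' s + (β / Real.sqrt ω) * u' s + Real.sqrt (2 * max (u s) 0 + ε) = 1)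
    (h0 : u 0 = α^2 / 2) (h0' : u' 0 = 0) :
    (∀ s ∈ Icc (0:ℝ) S,
      (1/2) * (u' s)^2 + (β / (4 * Real.sqrt ω)) * (∫ t in (0:ℝ)..s, (u' t)^2)
        ≤ (S * Real.sqrt ω / (2 * β)) * (α^2 + 1)
          + (Real.sqrt ω / β) * (1 + S * Real.sqrt ω / β)^2 * S) ∧
    (∀ s ∈ Icc (0:ℝ) S,
      |u' s| ≤ Real.sqrt (2 * ((S * Real.sqrt ω / (2 * β)) * (α^2 + 1)
          + (Real.sqrt ω / β) * (1 + S * Real.sqrt ω / β)^2 * S))) := by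
  obtain ⟨hε0, hε1⟩ := hε
  have hw0 : 0 < Real.sqrt ω := Real.sqrt_pos.mpr hω
  set w := Real.sqrt ω with hwdef
  clear_value w
  have hw : 0 < w := hw0
  set k := β / w with hkdef
  have hk : 0 < k := div_pos hβ hw
  clear_value k
  have hk0 : k ≠ 0 := hk.ne'
  have hqnn : ∀ s, 0 ≤ Real.sqrt (2 * max (u s) 0 + ε) := fun s => Real.sqrt_nonneg _
  have hqsq : ∀ s, (Real.sqrt (2 * max (u s) 0 + ε))^2 = 2 * max (u s) 0 + ε := by
    intro s
    have h1 : (0:ℝ) ≤ max (u s) 0 := le_max_right _ _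
    exact Real.sq_sqrt (by linarith)
  have hodes : ∀ s ∈ Icc (0:ℝ) S,
      u'' s = 1 - k * u' s - Real.sqrt (2 * max (u s) 0 + ε) := by
    intro s hs
    have := hODE s hs
    linarith
  have hu'c : ContinuousOn u' (Icc 0 S) := fun x hx => (hu'' x hx).continuousWithinAt
  -- derivative of s ↦ exp (k*s)
  have hex : ∀ x : ℝ, HasDerivAt (fun s => Real.exp (k*s)) (Real.exp (k*x) * k) x := by
    intro x
    have h := ((hasDerivAt_id x).const_mul k).exp
    simpa using h
  -- Step 1 : u' ≤ 1/k
  have step1 : ∀ s ∈ Icc (0:ℝ) S, u' s ≤ 1 / k := by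
    have key := aux_le_of_deriv_nonpos hS
      (f := fun s => Real.exp (k*s) * u' s - (Real.exp (k*s) - 1)/k)
      (f' := fun x => -(Real.exp (k*x) * Real.sqrt (2 * max (u x) 0 + ε)))
      (by
        intro x hx
        have h1 : HasDerivWithinAt (fun s => Real.exp (k*s) * u' s - (Real.exp (k*s) - 1)/k)
            (Real.exp (k*x) * k * u' x + Real.exp (k*x) * u'' x - (Real.exp (k*x) * k)/k)
            (Icc 0 S) x :=
          ((hex x).hasDerivWithinAt.mul (hu'' x hx)).sub
            (((hex x).hasDerivWithinAt.sub_const 1).div_const k)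
        have h2 : -(Real.exp (k*x) * Real.sqrt (2 * max (u x) 0 + ε))
            = Real.exp (k*x) * k * u' x + Real.exp (k*x) * u'' x - (Real.exp (k*x) * k)/k := by
          rw [hodes x hx]
          field_simp
          ring
        show HasDerivWithinAt _ (-(Real.exp (k*x) * Real.sqrt (2 * max (u x) 0 + ε))) _ x
        rw [h2]
        exact h1)
      (by
        intro x _
        show -(Real.exp (k*x) * Real.sqrt (2 * max (u x) 0 + ε)) ≤ 0
        exact neg_nonpos.mpr (mul_nonneg (Real.exp_pos _).le (hqnn x)))
    intro s hs
    have hg := key s hs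
    simp only [mul_zero, Real.exp_zero, one_mul, h0', sub_self, zero_div, sub_zero, zero_sub,
      mul_one] at hg
    have hE := Real.exp_pos (k*s)
    rw [sub_nonpos, le_div_iff₀ hk] at hg
    rw [le_div_iff₀ hk]
    nlinarith [hg, hE]
  -- Step 2 : u s ≤ α^2/2 + s/k
  have ubound : ∀ s ∈ Icc (0:ℝ) S, u s ≤ α^2/2 + s/k := by
    have key := aux_le_of_deriv_nonpos hS
      (f := fun s => u s - s/k) (f' := fun x => u' x - 1/k)
      (by
        intro x hx
        exact (hu' x hx).sub (((hasDerivAt_id x).div_const k).hasDerivWithinAt))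
      (by
        intro x hx
        have := step1 x (Ioo_subset_Icc_self hx)
        show u' x - 1/k ≤ 0
        linarith)
    intro s hs
    have h := key s hs
    simp only [h0, zero_div, sub_zero] at h
    linarith
  -- Step 3 : pointwise energy inequality
  set C := (α^2 + 2*S/k + 2)/(2*k) with hCdef
  clear_value C
  have hSk : 0 ≤ S/k := div_nonneg hS.le hk.le
  have h2Sk : 0 ≤ 2*S/k := by rw [mul_div_assoc]; linarith
  have hCnn : 0 ≤ C := by
    rw [hCdef]
    apply div_nonneg _ (by linarith)
    nlinarith [sq_nonneg α]
  have ptw : ∀ x ∈ Icc (0:ℝ) S, u' x * u'' x + (k/2) * (u' x)^2 ≤ C := by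
    intro x hx
    have h2 := hodes x hx
    have hq2 : (Real.sqrt (2 * max (u x) 0 + ε))^2 ≤ α^2 + 2*S/k + 1 := by
      rw [hqsq]
      have h3 : u x ≤ α^2/2 + x/k := ubound x hx
      have h4 : x/k ≤ S/k := by
        exact div_le_div_of_nonneg_right hx.2 hk.le
      have h5 : max (u x) 0 ≤ α^2/2 + S/k := by
        apply max_le (by linarith)
        nlinarith [sq_nonneg α]
      rw [mul_div_assoc]
      nlinarith
    rw [hCdef, le_div_iff₀ (by linarith : (0:ℝ) < 2*k)]
    rw [h2]
    nlinarith [sq_nonneg (k * u' x - (1 - Real.sqrt (2 * max (u x) 0 + ε))), hqnn x, hq2, hk]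
  -- Step 4 : integrate
  have main : ∀ s ∈ Icc (0:ℝ) S,
      (1/2) * (u' s)^2 + (k/4) * (∫ t in (0:ℝ)..s, (u' t)^2) ≤ C * S := by
    intro s hs
    have hs0 : (0:ℝ) ≤ s := hs.1
    have hsS : s ≤ S := hs.2
    have hsub : Icc (0:ℝ) s ⊆ Icc 0 S := Icc_subset_Icc le_rfl hsS
    have hc1 : ContinuousOn (fun t => u' t * u'' t) (Icc 0 s) :=
      (hu'c.mono hsub).mul (hu''c.mono hsub)
    have hint1 : IntervalIntegrable (fun t => u' t * u'' t) MeasureTheory.volume 0 s :=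
      hc1.intervalIntegrable_of_Icc hs0
    have hc2 : ContinuousOn (fun t => (u' t)^2) (Icc 0 s) := (hu'c.mono hsub).pow 2
    have hint2 : IntervalIntegrable (fun t => (u' t)^2) MeasureTheory.volume 0 s :=
      hc2.intervalIntegrable_of_Icc hs0
    have hFTC : ∫ t in (0:ℝ)..s, u' t * u'' t = (1/2)*(u' s)^2 - (1/2)*(u' 0)^2 := by
      apply intervalIntegral.integral_eq_sub_of_hasDeriv_right_of_le hs0
        (by exact continuousOn_const.mul hc2)
        _ hint1
      intro x hx
      have hx' : x ∈ Icc (0:ℝ) S := ⟨hx.1.le, hx.2.le.trans hsS⟩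
      have hd : HasDerivAt u' (u'' x) x :=
        (hu'' x hx').hasDerivAt (Icc_mem_nhds hx.1 (lt_of_lt_of_le hx.2 hsS))
      have hdd : HasDerivAt (fun t => (1/2)*(u' t)^2) ((1/2)*((2:ℕ) * u' x ^ 1 * u'' x)) x :=
        (hd.pow 2).const_mul (1/2)
      have hdd' : HasDerivAt (fun t => (1/2)*(u' t)^2) (u' x * u'' x) x := by
        convert hdd using 1
        push_cast
        ring
      exact hdd'.hasDerivWithinAt
    have hmono : (∫ t in (0:ℝ)..s, (u' t * u'' t + (k/2)*(u' t)^2))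
        ≤ ∫ t in (0:ℝ)..s, (C:ℝ) := by
      apply intervalIntegral.integral_mono_on hs0
        (hint1.add (hint2.const_mul (k/2))) intervalIntegrable_const
      intro x hx
      exact ptw x (hsub hx)
    have hsplit : (∫ t in (0:ℝ)..s, (u' t * u'' t + (k/2)*(u' t)^2))
        = (∫ t in (0:ℝ)..s, u' t * u'' t) + (k/2) * ∫ t in (0:ℝ)..s, (u' t)^2 := by
      rw [intervalIntegral.integral_add hint1 (hint2.const_mul (k/2)),
        intervalIntegral.integral_const_mul]
    have hCint : (∫ t in (0:ℝ)..s, (C:ℝ)) = s * C := by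
      rw [intervalIntegral.integral_const, smul_eq_mul, sub_zero]
    have hInn : 0 ≤ ∫ t in (0:ℝ)..s, (u' t)^2 :=
      intervalIntegral.integral_nonneg hs0 (fun x _ => sq_nonneg _)
    have hsC : s * C ≤ S * C := mul_le_mul_of_nonneg_right hsS hCnn
    rw [hsplit, hFTC, hCint, h0'] at hmono
    nlinarith [hInn, hk, mul_nonneg hk.le hInn]
  -- Step 5 : arithmetic comparison of constants
  have hwne : w ≠ 0 := hw.ne'
  have hβ0 : β ≠ 0 := hβ.ne'
  have hRHS : (S * w / (2*β)) * (α^2+1) + (w/β)*(1 + S*w/β)^2 * S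
      = (S/(2*k))*(α^2+1) + (1/k)*(1+S/k)^2*S := by
    rw [hkdef]
    field_simp
    try ring
  have hdiff : (S/(2*k))*(α^2+1) + (1/k)*(1+S/k)^2*S - C * S
      = S/(2*k) + S^2/k^2 + S^3/k^3 := by
    rw [hCdef]
    field_simp
    try ring
  have hfinal : C * S ≤ (S * w / (2*β)) * (α^2+1) + (w/β)*(1 + S*w/β)^2 * S := by
    rw [hRHS]
    have t1 : 0 ≤ S/(2*k) := div_nonneg hS.le (by linarith)
    have t2 : 0 ≤ S^2/k^2 := div_nonneg (sq_nonneg S) (sq_nonneg k)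
    have t3 : 0 ≤ S^3/k^3 := div_nonneg (pow_nonneg hS.le 3) (pow_nonneg hk.le 3)
    linarith [hdiff]
  have hk4 : β / (4*w) = k/4 := by
    rw [hkdef]; ring
  have part1 : ∀ s ∈ Icc (0:ℝ) S,
      (1/2) * (u' s)^2 + (β / (4 * w)) * (∫ t in (0:ℝ)..s, (u' t)^2)
        ≤ (S * w / (2 * β)) * (α^2 + 1) + (w / β) * (1 + S * w / β)^2 * S := by
    intro s hs
    have h := main s hs
    rw [hk4]
    linarith
  refine ⟨part1, ?_⟩
  intro s hs
  have h1 := part1 s hs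
  have hInn : 0 ≤ ∫ t in (0:ℝ)..s, (u' t)^2 :=
    intervalIntegral.integral_nonneg hs.1 (fun x _ => sq_nonneg _)
  have hkw : 0 < β / (4*w) := div_pos hβ (by linarith)
  have h2 : (u' s)^2 ≤ 2 * ((S * w / (2 * β)) * (α^2 + 1) + (w / β) * (1 + S * w / β)^2 * S) := by
    nlinarith [mul_nonneg hkw.le hInn]
  exact Real.abs_le_sqrt h2
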